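/- arXiv:2002.07758 — 2 statements merged into one kernel-verified Lean document; each statement's English description precedes it below -/
import Mathlib

section
/- For every $r \in \mathbb{N}$ and $d \ge 1$, $\int_{\mathcal{S}} \sum_{k \in \mathbb{N}_0^d \cap r\mathcal{S}} P_{k,r}(x)^2 \, dx = \frac{2^{-d}\sqrt{\pi}\,\Gamma(r+1)}{\Gamma(d/2 + 1/2)\,\Gamma(r + d/2 + 1)}$, where $\mathcal{S}$ is the $d$-dimensional unit simplex. -/
open MeasureTheory Finset

/-- The d-dimensional unit simplex. -/
def simplexSet (d : ℕ) : Set (Fin d → ℝ) :=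
  {x | (∀ i, 0 ≤ x i ∧ x i ≤ 1) ∧ ∑ i, x i ≤ 1}

/-- The lattice points of the discrete simplex `ℕ₀^d ∩ mS`. -/
def grid (d m : ℕ) : Finset (Fin d → ℕ) :=
  (Finset.Icc 0 (fun _ => m)).filter (fun k => ∑ i, k i ≤ m)

/-- Multinomial(m, x) probability mass at k. -/
noncomputable def Pw (d m : ℕ) (k : Fin d → ℕ) (x : Fin d → ℝ) : ℝ :=
  ((m.factorial : ℝ) / ((m - ∑ i, k i).factorial * ∏ i, (k i).factorial)) *
    (1 - ∑ i, x i) ^ (m - ∑ i, k i) * ∏ i, x i ^ k i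

noncomputable def gg (β : ℝ) : ℕ → ℝ
  | 0 => 1
  | (r+1) => (4*r+β)/(r+1) * gg β r

noncomputable def cb (j : ℕ) : ℝ := (Nat.centralBinom j : ℝ)

lemma cb_zero : cb 0 = 1 := by simp [cb, Nat.centralBinom_zero]

lemma cb_rec (j : ℕ) : ((j:ℝ)+1) * cb (j+1) = (4*j+2) * cb j := by
  have := Nat.succ_mul_centralBinom_succ j
  have h : ((j+1) * (j+1).centralBinom : ℝ) = (2 * (2*j+1) * j.centralBinom : ℕ) := by
    exact_mod_cast congrArg (Nat.cast : ℕ → ℝ) this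
  push_cast at h
  unfold cb; linarith

lemma gg_rec (β : ℝ) (n : ℕ) : ((n:ℝ)+1) * gg β (n+1) = (4*n+β) * gg β n := by
  have hne : ((n:ℝ)+1) ≠ 0 := by positivity
  show ((n:ℝ)+1) * ((4*n+β)/(n+1) * gg β n) = (4*n+β) * gg β n
  field_simp

lemma conv_gg (β : ℝ) : ∀ r : ℕ, ∑ j ∈ range (r+1), cb j * gg β (r - j) = gg (β+2) r := by
  intro r
  induction r with
  | zero => simp [cb_zero, gg]
  | succ r ih =>
    have key : ((r:ℝ)+1) * ∑ j ∈ range (r+2), cb j * gg β (r+1-j)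
        = (4*r+β+2) * ∑ j ∈ range (r+1), cb j * gg β (r-j) := by
      rw [Finset.mul_sum]
      have split : ∀ j ∈ range (r+2), ((r:ℝ)+1) * (cb j * gg β (r+1-j))
          = ((j:ℝ) * cb j) * gg β (r+1-j) + cb j * ((((r+1-j : ℕ)):ℝ) * gg β (r+1-j)) := by
        intro j hj
        have hj' : j ≤ r+1 := by simpa [Nat.lt_succ_iff] using hj
        have : (((r+1-j : ℕ)):ℝ) = (r:ℝ)+1-(j:ℝ) := by
          push_cast [Nat.cast_sub hj']; ring
        rw [this]; ring
      rw [Finset.sum_congr rfl split, Finset.sum_add_distrib]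
      have e1 : ∑ j ∈ range (r+2), ((j:ℝ) * cb j) * gg β (r+1-j)
          = ∑ j ∈ range (r+1), (4*(j:ℝ)+2) * cb j * gg β (r-j) := by
        rw [Finset.sum_range_succ']
        simp only [Nat.cast_zero, zero_mul]
        rw [add_zero]
        apply Finset.sum_congr rfl
        intro j hj
        have hc : ((j:ℝ)+1) * cb (j+1) = (4*j+2) * cb j := cb_rec j
        have hsub : r + 1 - (j+1) = r - j := by omega
        rw [hsub]
        push_cast
        calc ((j:ℝ)+1) * cb (j+1) * gg β (r-j) = ((4*j+2) * cb j) * gg β (r-j) := by rw [hc]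
          _ = (4*(j:ℝ)+2) * cb j * gg β (r-j) := by ring
      have e2 : ∑ j ∈ range (r+2), cb j * ((((r+1-j : ℕ)):ℝ) * gg β (r+1-j))
          = ∑ j ∈ range (r+1), cb j * ((4*(((r-j:ℕ)):ℝ)+β) * gg β (r-j)) := by
        rw [Finset.sum_range_succ]
        simp only [Nat.sub_self, Nat.cast_zero, zero_mul, mul_zero, add_zero]
        apply Finset.sum_congr rfl
        intro j hj
        have hj' : j ≤ r := by simpa [Nat.lt_succ_iff] using hj
        have hsub : r + 1 - j = (r - j) + 1 := by omega
        rw [hsub]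
        push_cast
        rw [gg_rec β (r-j)]
      rw [e1, e2, ← Finset.sum_add_distrib, Finset.mul_sum]
      apply Finset.sum_congr rfl
      intro j hj
      have hj' : j ≤ r := by simpa [Nat.lt_succ_iff] using hj
      have hcast : (((r-j:ℕ)):ℝ) = (r:ℝ) - (j:ℝ) := by
        push_cast [Nat.cast_sub hj']; ring
      rw [hcast]; ring
    have hne : ((r:ℝ)+1) ≠ 0 := by positivity
    have step : ∑ j ∈ range (r+2), cb j * gg β (r+1-j)
        = (4*r+(β+2))/((r:ℝ)+1) * ∑ j ∈ range (r+1), cb j * gg β (r-j) := by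
      field_simp
      linarith [key]
    rw [step, ih]
    rfl

lemma cb_eq_gg : ∀ r, cb r = gg 2 r := by
  intro r
  induction r with
  | zero => simp [cb_zero, gg]
  | succ r ih =>
    have hc := cb_rec r
    have hne : ((r:ℝ)+1) ≠ 0 := by positivity
    have : cb (r+1) = (4*r+2)/((r:ℝ)+1) * cb r := by
      field_simp; linarith
    rw [this, ih]; rfl

noncomputable def gridSum (d r : ℕ) : ℝ :=
  ∑ k ∈ grid d r, (∏ i, cb (k i)) * cb (r - ∑ i, k i)

lemma grid_zero (r : ℕ) : grid 0 r = {(fun i => i.elim0)} := by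
  ext k
  constructor
  · intro _
    have : k = fun i => i.elim0 := funext fun i => i.elim0
    simp [this]
  · intro _
    simp only [grid, Finset.mem_filter, Finset.mem_Icc]
    refine ⟨⟨fun i => i.elim0, fun i => i.elim0⟩, by simp⟩

lemma gridSum_zero (r : ℕ) : gridSum 0 r = cb r := by
  rw [gridSum, grid_zero]
  simp

lemma grid_succ_sum {M : Type*} [AddCommMonoid M] (d r : ℕ) (f : (Fin (d+1) → ℕ) → M) :
    ∑ k ∈ grid (d+1) r, f k = ∑ j ∈ range (r+1), ∑ k ∈ grid d (r-j), f (Fin.cons j k) := by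
  rw [Finset.sum_sigma' (range (r+1)) (fun j => grid d (r-j)) (fun j k => f (Fin.cons j k))]
  apply Finset.sum_nbij' (i := fun k => (⟨k 0, Fin.tail k⟩ : Σ _ : ℕ, (Fin d → ℕ)))
    (j := fun p => Fin.cons p.1 p.2)
  · intro k hk
    simp only [grid, Finset.mem_filter, Finset.mem_Icc] at hk
    obtain ⟨⟨-, hle⟩, hsum⟩ := hk
    rw [Fin.sum_univ_succ] at hsum
    simp only [Finset.mem_sigma, Finset.mem_range, grid, Finset.mem_filter, Finset.mem_Icc]
    have htail : ∑ i, Fin.tail k i = ∑ i, k (Fin.succ i) := rfl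
    refine ⟨by omega, ⟨⟨fun i => Nat.zero_le _, ?_⟩, by omega⟩⟩
    intro i
    have h1 : k i.succ ≤ ∑ i, k (Fin.succ i) :=
      Finset.single_le_sum (f := fun i => k (Fin.succ i)) (fun i _ => Nat.zero_le _)
        (Finset.mem_univ i)
    show Fin.tail k i ≤ r - k 0
    have h2 : Fin.tail k i = k i.succ := rfl
    omega
  · intro p hp
    simp only [Finset.mem_sigma, Finset.mem_range, grid, Finset.mem_filter, Finset.mem_Icc] at hp
    obtain ⟨hj, ⟨-, hle⟩, hsum⟩ := hp
    simp only [grid, Finset.mem_filter, Finset.mem_Icc]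
    rw [Fin.sum_univ_succ]
    simp only [Fin.cons_zero, Fin.cons_succ]
    refine ⟨⟨fun i => Nat.zero_le _, ?_⟩, by omega⟩
    intro i
    refine Fin.cases ?_ ?_ i
    · simp only [Fin.cons_zero]
      omega
    · intro i'
      simp only [Fin.cons_succ]
      have h : p.2 i' ≤ r - p.1 := hle i'
      omega
  · intro k _; exact Fin.cons_self_tail k
  · intro p _
    simp only [Fin.cons_zero, Fin.tail_cons]
  · intro k _
    exact congrArg f (Fin.cons_self_tail k).symm

lemma gridSum_eq (d : ℕ) : ∀ r, gridSum d r = gg (2*d+2) r := by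
  induction d with
  | zero => intro r; rw [gridSum_zero, cb_eq_gg]; norm_num
  | succ d ih =>
    intro r
    rw [gridSum, grid_succ_sum d r (fun k => (∏ i, cb (k i)) * cb (r - ∑ i, k i))]
    have key : ∀ j ∈ range (r+1), (∑ k ∈ grid d (r-j),
        (∏ i, cb ((Fin.cons j k : Fin (d+1) → ℕ) i)) *
          cb (r - ∑ i, (Fin.cons j k : Fin (d+1) → ℕ) i))
        = cb j * gridSum d (r-j) := by
      intro j hj
      rw [gridSum, Finset.mul_sum]
      apply Finset.sum_congr rfl
      intro k hk
      rw [Fin.prod_univ_succ, Fin.sum_univ_succ]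
      simp only [Fin.cons_zero, Fin.cons_succ]
      rw [show r - (j + ∑ i, k i) = r - j - ∑ i, k i by omega]
      ring
    rw [Finset.sum_congr rfl key]
    have key2 : ∀ j ∈ range (r+1), cb j * gridSum d (r-j) = cb j * gg (2*d+2) (r-j) := by
      intro j _; rw [ih]
    rw [Finset.sum_congr rfl key2, conv_gg]
    have : (2*(d:ℝ)+2)+2 = 2*((d:ℕ)+1:ℕ)+2 := by push_cast; ring
    rw [this]

lemma fact_prod_nat (a : ℕ) : ∀ b : ℕ,
    a.factorial * ∏ j ∈ range (b+1), (a+1+j) = (a+b+1).factorial := by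
  intro b
  induction b with
  | zero => simp [Nat.factorial_succ, Nat.mul_comm]
  | succ b ih =>
    rw [Finset.prod_range_succ, ← Nat.mul_assoc, ih]
    rw [show a+(b+1)+1 = (a+b+1)+1 by omega]
    conv_rhs => rw [Nat.factorial_succ]
    rw [Nat.mul_comm]
    congr 1
    omega

lemma beta_nat (a b : ℕ) : ∫ x in (0:ℝ)..1, x^a * (1-x)^b
    = (a.factorial * b.factorial : ℝ) / (a+b+1).factorial := by
  have hu : 0 < ((a:ℂ)+1).re := by simp; positivity
  have h1 : Complex.betaIntegral ((a:ℂ)+1) ((b:ℂ)+1)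
      = ((∫ x in (0:ℝ)..1, x^a * (1-x)^b : ℝ) : ℂ) := by
    rw [Complex.betaIntegral]
    rw [← intervalIntegral.integral_ofReal]
    apply intervalIntegral.integral_congr
    intro x hx
    have ha : ((a:ℂ)+1-1) = ((a:ℕ):ℂ) := by ring
    have hb : ((b:ℂ)+1-1) = ((b:ℕ):ℂ) := by ring
    simp only [ha, hb, Complex.cpow_natCast]
    push_cast
    ring
  have h2 := Complex.betaIntegral_eval_nat_add_one_right hu b
  rw [h1] at h2
  have hfa : (a.factorial : ℂ) ≠ 0 := by exact_mod_cast a.factorial_ne_zero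
  have h3 : (∏ j ∈ range (b+1), ((a:ℂ)+1+(j:ℂ))) = ((a+b+1).factorial : ℂ) / (a.factorial : ℂ) := by
    have := fact_prod_nat a b
    have hcast : ((a.factorial * ∏ j ∈ range (b+1), (a+1+j) : ℕ) : ℂ) = ((a+b+1).factorial : ℂ) := by
      exact_mod_cast congrArg (Nat.cast : ℕ → ℂ) this
    push_cast at hcast
    rw [eq_div_iff hfa]
    linear_combination hcast
  rw [h3] at h2
  have hfab : ((a+b+1).factorial : ℂ) ≠ 0 := by exact_mod_cast (a+b+1).factorial_ne_zero
  rw [div_div_eq_mul_div] at h2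
  have : ((∫ x in (0:ℝ)..1, x^a * (1-x)^b : ℝ) : ℂ)
      = ((a.factorial * b.factorial : ℝ) / ((a+b+1).factorial : ℝ) : ℂ) := by
    rw [h2]
    push_cast
    field_simp
  exact_mod_cast this

def T (d : ℕ) : Set (Fin d → ℝ) := {x | (∀ i, 0 ≤ x i) ∧ ∑ i, x i ≤ 1}

def St (d : ℕ) (t : ℝ) : Set (Fin d → ℝ) := {x | (∀ i, 0 ≤ x i) ∧ ∑ i, x i ≤ t}

lemma isClosed_St (d : ℕ) (t : ℝ) : IsClosed (St d t) := by
  have h1 : IsClosed {x : Fin d → ℝ | ∀ i, 0 ≤ x i} := by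
    rw [Set.setOf_forall]
    exact isClosed_iInter fun i => isClosed_le continuous_const (continuous_apply i)
  have h2 : IsClosed {x : Fin d → ℝ | ∑ i, x i ≤ t} :=
    isClosed_le (continuous_finset_sum _ fun i _ => continuous_apply i) continuous_const
  have : St d t = {x : Fin d → ℝ | ∀ i, 0 ≤ x i} ∩ {x : Fin d → ℝ | ∑ i, x i ≤ t} := rfl
  rw [this]
  exact h1.inter h2

lemma T_eq (d : ℕ) : T d = St d 1 := rfl

lemma measurableSet_St (d : ℕ) (t : ℝ) : MeasurableSet (St d t) :=
  (isClosed_St d t).measurableSet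

lemma scaling (d : ℕ) (a : Fin d → ℕ) (b : ℕ) {t : ℝ} (ht : 0 < t) :
    ∫ x in St d t, (t - ∑ i, x i)^b * ∏ i, x i ^ a i
      = t^(b + (∑ i, a i) + d) *
        ∫ x in T d, (1 - ∑ i, x i)^b * ∏ i, x i ^ a i := by
  have hmt := measurableSet_St d t
  have hm1 := measurableSet_St d 1
  rw [← integral_indicator hmt, ← integral_indicator (T_eq d ▸ hm1)]
  have hsmul := MeasureTheory.Measure.integral_comp_smul (μ := volume)
    (f := (St d t).indicator (fun x => (t - ∑ i, x i)^b * ∏ i, x i ^ a i)) t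
  have hrank : Module.finrank ℝ (Fin d → ℝ) = d := by
    rw [Module.finrank_pi]; exact Fintype.card_fin d
  rw [hrank] at hsmul
  have hpt : ∀ x : Fin d → ℝ,
      (St d t).indicator (fun x => (t - ∑ i, x i)^b * ∏ i, x i ^ a i) (t • x)
      = t^(b + ∑ i, a i) *
        (T d).indicator (fun x => (1 - ∑ i, x i)^b * ∏ i, x i ^ a i) x := by
    intro x
    have hmem : t • x ∈ St d t ↔ x ∈ T d := by
      constructor
      · rintro ⟨h1, h2⟩
        constructor
        · intro i
          have := h1 i
          simp only [Pi.smul_apply, smul_eq_mul] at this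
          nlinarith [this]
        · have hs : ∑ i, (t • x) i = t * ∑ i, x i := by
            simp [Finset.mul_sum]
          rw [hs] at h2
          nlinarith [h2]
      · rintro ⟨h1, h2⟩
        constructor
        · intro i
          simp only [Pi.smul_apply, smul_eq_mul]
          exact mul_nonneg ht.le (h1 i)
        · have hs : ∑ i, (t • x) i = t * ∑ i, x i := by simp [Finset.mul_sum]
          rw [hs]
          nlinarith [h2]
    by_cases hx : x ∈ T d
    · rw [Set.indicator_of_mem (hmem.mpr hx), Set.indicator_of_mem hx]
      have hs : ∑ i, (t • x) i = t * ∑ i, x i := by simp [Finset.mul_sum]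
      rw [hs]
      have hp : ∏ i, (t • x) i ^ a i = t^(∑ i, a i) * ∏ i, x i ^ a i := by
        rw [← Finset.prod_pow_eq_pow_sum, ← Finset.prod_mul_distrib]
        apply Finset.prod_congr rfl
        intro i _
        simp [mul_pow]
      rw [hp]
      have h1 : t - t * ∑ i, x i = t * (1 - ∑ i, x i) := by ring
      rw [h1, mul_pow, pow_add]
      ring
    · rw [Set.indicator_of_notMem (fun h => hx (hmem.mp h)), Set.indicator_of_notMem hx]
      ring
  simp only [hpt] at hsmul
  rw [integral_const_mul] at hsmul
  have habs : |((t:ℝ)^d)⁻¹| = (t^d)⁻¹ := by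
    rw [abs_of_nonneg]; positivity
  rw [habs, smul_eq_mul] at hsmul
  have htd : (t:ℝ)^d ≠ 0 := by positivity
  have := hsmul.symm
  rw [pow_add]
  field_simp at this ⊢
  linarith [this]

lemma dirichlet : ∀ (d : ℕ) (a : Fin d → ℕ) (b : ℕ),
    ∫ x in T d, (1 - ∑ i, x i)^b * ∏ i, x i ^ a i
      = (∏ i, ((a i).factorial : ℝ)) * b.factorial / (((∑ i, a i) + b + d).factorial : ℝ) := by
  intro d
  induction d with
  | zero =>
    intro a b
    have hT : T 0 = Set.univ := by
      ext x
      simp [T]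
    rw [hT, Measure.restrict_univ]
    have : ∀ x : Fin 0 → ℝ, (1 - ∑ i, x i)^b * ∏ i, x i ^ a i = 1 := by
      intro x; simp
    simp only [this]
    rw [integral_const]
    have : (volume : Measure (Fin 0 → ℝ)) Set.univ = 1 := by
      rw [MeasureTheory.volume_pi, Measure.pi_univ]
      simp
    rw [measureReal_def, this]
    have hb : ((b.factorial:ℝ)) ≠ 0 := by exact_mod_cast b.factorial_ne_zero
    simp
    field_simp
  | succ d ih =>
    intro a b
    set S' : Set (ℝ × (Fin d → ℝ)) :=
      {p | 0 ≤ p.1 ∧ (∀ i, 0 ≤ p.2 i) ∧ p.1 + ∑ i, p.2 i ≤ 1} with hS'def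
    have hS'closed : IsClosed S' := by
      have h1 : IsClosed {p : ℝ × (Fin d → ℝ) | 0 ≤ p.1} :=
        isClosed_le continuous_const continuous_fst
      have h2 : IsClosed {p : ℝ × (Fin d → ℝ) | ∀ i, 0 ≤ p.2 i} := by
        rw [Set.setOf_forall]
        exact isClosed_iInter fun i =>
          isClosed_le continuous_const ((continuous_apply i).comp continuous_snd)
      have h3 : IsClosed {p : ℝ × (Fin d → ℝ) | p.1 + ∑ i, p.2 i ≤ 1} :=
        isClosed_le (continuous_fst.add
          (continuous_finset_sum _ fun i _ => (continuous_apply i).comp continuous_snd))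
          continuous_const
      have : S' = {p : ℝ × (Fin d → ℝ) | 0 ≤ p.1} ∩ ({p | ∀ i, 0 ≤ p.2 i} ∩ {p | p.1 + ∑ i, p.2 i ≤ 1}) := rfl
      rw [this]
      exact h1.inter (h2.inter h3)
    have hS'meas := hS'closed.measurableSet
    have hS'compact : IsCompact S' := by
      have hsub : S' ⊆ (Set.Icc (0:ℝ) 1) ×ˢ (Set.Icc (0 : Fin d → ℝ) 1) := by
        rintro ⟨y, z⟩ ⟨h1, h2, h3⟩
        have hzs : (0:ℝ) ≤ ∑ i, z i := Finset.sum_nonneg fun i _ => h2 i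
        constructor
        · exact ⟨h1, by linarith⟩
        · constructor
          · intro i; exact h2 i
          · intro i
            have : z i ≤ ∑ j, z j :=
              Finset.single_le_sum (f := fun j => z j) (fun j _ => h2 j) (Finset.mem_univ i)
            show z i ≤ 1
            linarith
      exact IsCompact.of_isClosed_subset (isCompact_Icc.prod isCompact_Icc) hS'closed hsub
    set h : ℝ × (Fin d → ℝ) → ℝ :=
      fun q => (1 - (q.1 + ∑ i, q.2 i))^b * (q.1 ^ a 0 * ∏ i, q.2 i ^ a i.succ) with hhdef
    have hhcont : Continuous h := by
      apply Continuous.mul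
      · exact (continuous_const.sub (continuous_fst.add
          (continuous_finset_sum _ fun i _ => (continuous_apply i).comp continuous_snd))).pow b
      · exact ((continuous_fst.pow _).mul
          (continuous_finset_prod _ fun i _ => ((continuous_apply i).comp continuous_snd).pow _))
    set F : ℝ × (Fin d → ℝ) → ℝ := S'.indicator h with hFdef
    have hTmeas : MeasurableSet (T (d+1)) := T_eq (d+1) ▸ measurableSet_St (d+1) 1
    -- step 1 & 2: transport along the measurable equiv
    set e := MeasurableEquiv.piFinSuccAbove (fun _ : Fin (d+1) => ℝ) 0 with hedef
    have he : ∀ x : Fin (d+1) → ℝ, e x = (x 0, Fin.tail x) := by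
      intro x
      simp [hedef, MeasurableEquiv.piFinSuccAbove]
    have hpt : ∀ x : Fin (d+1) → ℝ,
        (T (d+1)).indicator (fun x => (1 - ∑ i, x i)^b * ∏ i, x i ^ a i) x = F (e x) := by
      intro x
      rw [he x]
      have hmem : (x 0, Fin.tail x) ∈ S' ↔ x ∈ T (d+1) := by
        constructor
        · rintro ⟨h1, h2, h3⟩
          constructor
          · intro i
            refine Fin.cases h1 (fun i' => h2 i') i
          · rw [Fin.sum_univ_succ]
            exact h3
        · rintro ⟨h1, h2⟩
          refine ⟨h1 0, fun i => h1 i.succ, ?_⟩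
          rw [Fin.sum_univ_succ] at h2
          exact h2
      by_cases hx : x ∈ T (d+1)
      · rw [Set.indicator_of_mem hx, hFdef, Set.indicator_of_mem (hmem.mpr hx)]
        show (1 - ∑ i, x i)^b * ∏ i, x i ^ a i
          = (1 - (x 0 + ∑ i, Fin.tail x i))^b * ((x 0) ^ a 0 * ∏ i, Fin.tail x i ^ a i.succ)
        rw [Fin.sum_univ_succ, Fin.prod_univ_succ]
        rfl
      · rw [Set.indicator_of_notMem hx, hFdef,
          Set.indicator_of_notMem (fun h => hx (hmem.mp h))]
    rw [← integral_indicator hTmeas]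
    calc ∫ x, (T (d+1)).indicator (fun x => (1 - ∑ i, x i)^b * ∏ i, x i ^ a i) x
        = ∫ x, F (e x) := by
          apply integral_congr_ae
          filter_upwards with x using hpt x
      _ = ∫ p, F p := (MeasureTheory.volume_preserving_piFinSuccAbove
            (fun _ : Fin (d+1) => ℝ) 0).integral_comp (MeasurableEquiv.measurableEmbedding e) F
      _ = ∫ y, ∫ z, F (y, z) := by
          rw [Measure.volume_eq_prod]
          apply MeasureTheory.integral_prod
          rw [← Measure.volume_eq_prod]
          rw [hFdef, integrable_indicator_iff hS'meas]
          exact hhcont.continuousOn.integrableOn_compact hS'compact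
      _ = (∏ i, ((a i).factorial : ℝ)) * b.factorial
            / (((∑ i, a i) + b + (d+1)).factorial : ℝ) := by
          set M := b + (∑ i : Fin d, a i.succ) + d with hMdef
          set Dval := (∏ i : Fin d, ((a i.succ).factorial : ℝ)) * b.factorial
              / (((∑ i : Fin d, a i.succ) + b + d).factorial : ℝ) with hDdef
          have claim : ∀ y : ℝ, y ≠ 1 → (∫ z, F (y, z))
              = (Set.Icc (0:ℝ) 1).indicator (fun y => y ^ a 0 * (1-y)^M * Dval) y := by
            intro y hy
            by_cases hy0 : 0 ≤ y
            · by_cases hy1 : y ≤ 1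
              · have hy1' : y < 1 := lt_of_le_of_ne hy1 hy
                have ht : 0 < 1 - y := by linarith
                have hFz : ∀ z, F (y, z) = y ^ a 0 *
                    (St d (1-y)).indicator
                      (fun z => ((1-y) - ∑ i, z i)^b * ∏ i, z i ^ a i.succ) z := by
                  intro z
                  by_cases hz : z ∈ St d (1-y)
                  · have hmem : (y,z) ∈ S' := by
                      refine ⟨hy0, hz.1, ?_⟩
                      have := hz.2
                      show y + ∑ i, z i ≤ 1
                      linarith
                    rw [hFdef, Set.indicator_of_mem hmem, Set.indicator_of_mem hz, hhdef]
                    show (1 - (y + ∑ i, z i))^b * (y ^ a 0 * ∏ i, z i ^ a i.succ)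
                      = y ^ a 0 * (((1-y) - ∑ i, z i)^b * ∏ i, z i ^ a i.succ)
                    have harg : 1 - (y + ∑ i, z i) = (1-y) - ∑ i, z i := by ring
                    rw [harg]; ring
                  · have hnm : (y,z) ∉ S' := by
                      rintro ⟨-, h2, h3⟩
                      exact hz ⟨h2, by
                        show ∑ i, z i ≤ 1 - y
                        have : y + ∑ i, z i ≤ 1 := h3
                        linarith⟩
                    rw [hFdef, Set.indicator_of_notMem hnm, Set.indicator_of_notMem hz,
                      mul_zero]
                simp only [hFz]
                rw [integral_const_mul, integral_indicator (measurableSet_St d (1-y)),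
                  scaling d (fun i => a i.succ) b ht, ih (fun i => a i.succ) b,
                  Set.indicator_of_mem (Set.mem_Icc.mpr ⟨hy0, hy1⟩)]
                ring
              · push_neg at hy1
                have hFz : ∀ z, F (y, z) = 0 := by
                  intro z
                  rw [hFdef]
                  apply Set.indicator_of_notMem
                  rintro ⟨-, h2, h3⟩
                  have : (0:ℝ) ≤ ∑ i, z i := Finset.sum_nonneg fun i _ => h2 i
                  have h3' : y + ∑ i, z i ≤ 1 := h3
                  linarith
                simp only [hFz, integral_zero]
                rw [Set.indicator_of_notMem]
                intro hmem
                exact absurd hmem.2 (not_le.mpr hy1)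
            · push_neg at hy0
              have hFz : ∀ z, F (y, z) = 0 := by
                intro z
                rw [hFdef]
                apply Set.indicator_of_notMem
                rintro ⟨h1, -, -⟩
                exact absurd h1 (not_le.mpr hy0)
              simp only [hFz, integral_zero]
              rw [Set.indicator_of_notMem]
              intro hmem
              exact absurd hmem.1 (not_le.mpr hy0)
          have hae : (fun y => ∫ z, F (y, z))
              =ᵐ[volume] (Set.Icc (0:ℝ) 1).indicator (fun y => y ^ a 0 * (1-y)^M * Dval) := by
            have h1 : ∀ᵐ (y:ℝ), y ≠ 1 := by
              rw [MeasureTheory.ae_iff]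
              have hset : {y : ℝ | ¬ y ≠ 1} = {1} := by ext y; simp
              rw [hset]
              exact Real.volume_singleton
            filter_upwards [h1] with y hy using claim y hy
          rw [integral_congr_ae hae, integral_indicator measurableSet_Icc]
          rw [MeasureTheory.integral_mul_const, MeasureTheory.integral_Icc_eq_integral_Ioc,
            ← intervalIntegral.integral_of_le zero_le_one, beta_nat (a 0) M]
          rw [Fin.prod_univ_succ, Fin.sum_univ_succ]
          have hnum : a 0 + M + 1 = (a 0 + ∑ i : Fin d, a i.succ) + b + (d+1) := by
            rw [hMdef]; omega
          have hden : (∑ i : Fin d, a i.succ) + b + d = M := by rw [hMdef]; omega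
          rw [hDdef, hden, hnum]
          have hM : ((M.factorial : ℝ)) ≠ 0 := by exact_mod_cast M.factorial_ne_zero
          have hK : (((a 0 + ∑ i : Fin d, a i.succ) + b + (d+1)).factorial : ℝ) ≠ 0 := by
            exact_mod_cast ((a 0 + ∑ i : Fin d, a i.succ) + b + (d+1)).factorial_ne_zero
          field_simp

lemma cb_fact (n : ℕ) : ((n*2).factorial : ℝ) = cb n * ((n.factorial : ℝ))^2 := by
  have h := Nat.choose_mul_factorial_mul_factorial (show n ≤ 2*n by omega)
  have h2 : 2*n - n = n := by omega
  rw [h2] at h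
  have hc : ((2*n).factorial : ℝ) = ((2*n).choose n : ℝ) * n.factorial * n.factorial := by
    exact_mod_cast h.symm
  have hcb : cb n = ((2*n).choose n : ℝ) := by
    rw [cb, Nat.centralBinom_eq_two_mul_choose]
  rw [show n*2 = 2*n by omega, hc, hcb]
  ring

lemma isCompact_T (d : ℕ) : IsCompact (T d) := by
  have hsub : T d ⊆ Set.Icc (0 : Fin d → ℝ) 1 := by
    rintro x ⟨h1, h2⟩
    constructor
    · intro i; exact h1 i
    · intro i
      have : x i ≤ ∑ j, x j :=
        Finset.single_le_sum (f := fun j => x j) (fun j _ => h1 j) (Finset.mem_univ i)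
      show x i ≤ 1
      linarith
  exact IsCompact.of_isClosed_subset isCompact_Icc (T_eq d ▸ isClosed_St d 1) hsub

lemma gg_gamma (d : ℕ) : ∀ r : ℕ,
    (r.factorial : ℝ) * Real.Gamma (((d:ℝ)+1)/2) * gg (2*(d:ℝ)+2) r
      = 4^r * Real.Gamma ((r:ℝ) + ((d:ℝ)+1)/2) := by
  intro r
  induction r with
  | zero => simp [gg]
  | succ r ih =>
    have hpos : (0:ℝ) < (r:ℝ) + ((d:ℝ)+1)/2 := by positivity
    have hrec := gg_rec (2*(d:ℝ)+2) r
    have hfac : (((r+1).factorial : ℕ) : ℝ) = ((r:ℝ)+1) * r.factorial := by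
      rw [Nat.factorial_succ]; push_cast; ring
    have harg : (((r+1:ℕ)):ℝ) + ((d:ℝ)+1)/2 = ((r:ℝ) + ((d:ℝ)+1)/2) + 1 := by push_cast; ring
    rw [hfac, harg, Real.Gamma_add_one hpos.ne']
    have h1 : ((r:ℝ)+1) * (r.factorial:ℝ) * Real.Gamma (((d:ℝ)+1)/2) * gg (2*(d:ℝ)+2) (r+1)
        = (r.factorial:ℝ) * Real.Gamma (((d:ℝ)+1)/2) * (((r:ℝ)+1) * gg (2*(d:ℝ)+2) (r+1)) := by
      ring
    rw [h1, hrec, pow_succ]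
    linear_combination (4*(r:ℝ)+2*(d:ℝ)+2) * ih

/-- Exact value of the integral of the sum of squared multinomial weights. -/
theorem integral_sum_sq_multinomial (d r : ℕ) (hd : 1 ≤ d) :
    ∫ x in simplexSet d, ∑ k ∈ grid d r, (Pw d r k x) ^ 2 =
      (2 : ℝ) ^ (-(d : ℤ)) * Real.sqrt Real.pi * Real.Gamma (r + 1) /
        (Real.Gamma (d / 2 + 1 / 2) * Real.Gamma (r + d / 2 + 1)) := by
  have hTeq : simplexSet d = T d := by
    ext x
    constructor
    · rintro ⟨h1, h2⟩
      exact ⟨fun i => (h1 i).1, h2⟩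
    · rintro ⟨h1, h2⟩
      refine ⟨fun i => ⟨h1 i, ?_⟩, h2⟩
      have : x i ≤ ∑ j, x j :=
        Finset.single_le_sum (f := fun j => x j) (fun j _ => h1 j) (Finset.mem_univ i)
      linarith
  rw [hTeq]
  have hswap : ∫ x in T d, ∑ k ∈ grid d r, (Pw d r k x)^2
      = ∑ k ∈ grid d r, ∫ x in T d, (Pw d r k x)^2 := by
    apply MeasureTheory.integral_finset_sum
    intro k _
    have hc : Continuous (fun x : Fin d → ℝ => (Pw d r k x)^2) := by
      unfold Pw
      fun_prop
    exact hc.continuousOn.integrableOn_compact (isCompact_T d)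
  rw [hswap]
  have hterm : ∀ k ∈ grid d r, ∫ x in T d, (Pw d r k x)^2
      = (r.factorial:ℝ)^2 / (((2*r+d).factorial : ℕ) : ℝ)
          * ((∏ i, cb (k i)) * cb (r - ∑ i, k i)) := by
    intro k hk
    have hkr : ∑ i, k i ≤ r := by
      simp only [grid, Finset.mem_filter] at hk
      exact hk.2
    have hsq : ∀ x : Fin d → ℝ, (Pw d r k x)^2
        = ((r.factorial : ℝ) / (((r - ∑ i, k i).factorial : ℝ) * ∏ i, ((k i).factorial:ℝ)))^2
          * ((1 - ∑ i, x i)^((r - ∑ i, k i)*2) * ∏ i, x i ^ (k i * 2)) := by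
      intro x
      simp only [Pw]
      push_cast
      simp only [pow_mul, Finset.prod_pow]
      ring
    simp only [hsq]
    rw [MeasureTheory.integral_const_mul, dirichlet d (fun i => k i * 2) ((r - ∑ i, k i)*2)]
    have hden : (∑ i, (k i * 2)) + (r - ∑ i, k i)*2 + d = 2*r+d := by
      rw [← Finset.sum_mul]
      omega
    rw [hden]
    have hprod : (∏ i, (((k i * 2).factorial : ℕ):ℝ))
        = (∏ i, cb (k i)) * (∏ i, ((k i).factorial:ℝ))^2 := by
      rw [← Finset.prod_pow, ← Finset.prod_mul_distrib]
      apply Finset.prod_congr rfl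
      intro i _
      exact cb_fact (k i)
    rw [hprod, cb_fact (r - ∑ i, k i)]
    have hne1 : (((r - ∑ i, k i).factorial : ℕ):ℝ) ≠ 0 := by
      exact_mod_cast (r - ∑ i, k i).factorial_ne_zero
    have hne2 : (∏ i, ((k i).factorial:ℝ)) ≠ 0 := by
      apply Finset.prod_ne_zero_iff.mpr
      intro i _
      exact_mod_cast (k i).factorial_ne_zero
    have hne3 : (((2*r+d).factorial : ℕ):ℝ) ≠ 0 := by
      exact_mod_cast (2*r+d).factorial_ne_zero
    field_simp
  rw [Finset.sum_congr rfl hterm, ← Finset.mul_sum]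
  rw [show (∑ k ∈ grid d r, ((∏ i, cb (k i)) * cb (r - ∑ i, k i))) = gridSum d r from rfl]
  rw [gridSum_eq d r]
  have hA : (0:ℝ) < Real.Gamma (((d:ℝ)+1)/2) := Real.Gamma_pos_of_pos (by positivity)
  have hfr : ((r.factorial : ℕ):ℝ) ≠ 0 := by exact_mod_cast r.factorial_ne_zero
  have hggval : gg (2*(d:ℝ)+2) r
      = 4^r * Real.Gamma ((r:ℝ) + ((d:ℝ)+1)/2) / ((r.factorial:ℝ) * Real.Gamma (((d:ℝ)+1)/2)) := by
    rw [eq_div_iff (by positivity)]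
    linarith [gg_gamma d r]
  rw [show ((2:ℝ)*(d:ℕ)+2) = 2*(d:ℝ)+2 from by push_cast; ring] at *
  rw [hggval]
  set s : ℝ := (r:ℝ) + ((d:ℝ)+1)/2 with hsdef
  have hdup := Real.Gamma_mul_Gamma_add_half s
  have hs1 : s + 1/2 = (r:ℝ) + (d:ℝ)/2 + 1 := by rw [hsdef]; ring
  have hs2 : 2*s = ((2*r+d:ℕ):ℝ) + 1 := by rw [hsdef]; push_cast; ring
  rw [hs1, hs2, Real.Gamma_nat_eq_factorial] at hdup
  have harg : 1 - ((((2*r+d:ℕ)):ℝ) + 1) = -(((2*r+d:ℕ)):ℝ) := by ring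
  rw [harg, Real.rpow_neg (by norm_num : (0:ℝ) ≤ 2), Real.rpow_natCast] at hdup
  have hG2 : (0:ℝ) < Real.Gamma ((r:ℝ) + (d:ℝ)/2 + 1) := Real.Gamma_pos_of_pos (by positivity)
  have htarg1 : (d:ℝ)/2 + 1/2 = ((d:ℝ)+1)/2 := by ring
  have htarg2 : Real.Gamma ((r:ℝ)+1) = (r.factorial : ℝ) := Real.Gamma_nat_eq_factorial r
  rw [htarg1, htarg2]
  have hzpow : (2:ℝ)^(-(d:ℤ)) = ((2:ℝ)^d)⁻¹ := by
    rw [zpow_neg, zpow_natCast]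
  rw [hzpow]
  have hGs : Real.Gamma s
      = (((2*r+d).factorial : ℕ):ℝ) * ((2:ℝ)^(2*r+d))⁻¹ * Real.sqrt Real.pi
          / Real.Gamma ((r:ℝ)+(d:ℝ)/2+1) := by
    rw [eq_div_iff hG2.ne']
    linarith [hdup]
  rw [hGs]
  have h4 : (4:ℝ)^r = 2^(2*r) := by
    rw [show (4:ℝ) = 2^2 from by norm_num, ← pow_mul]
  have hne3 : (((2*r+d).factorial : ℕ):ℝ) ≠ 0 := by exact_mod_cast (2*r+d).factorial_ne_zero
  have h2ne : ((2:ℝ)^(2*r+d)) ≠ 0 := by positivity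
  have h2dne : ((2:ℝ)^d) ≠ 0 := by positivity
  rw [h4, pow_add]
  field_simp
end

section
/- Uniform boundedness of the correction term: for every dimension $d$, every $i \in \{1,\dots,d\}$, every $r \in \mathbb{N}$, and every $x$ in the simplex $\mathcal{S}$, the quantity $R_{i,r}(x) := r^{1/2} \sum_{k,\ell \in \mathbb{N}_0^d \cap r\mathcal{S}} ((k_i \wedge \ell_i)/r - x_i) P_{k,r}(x) P_{\ell,r}(x)$ satisfies $|R_{i,r}(x)| \le 1$. -/
open MeasureTheory Finset

lemma mem_grid {d m : ℕ} {k : Fin d → ℕ} :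
    k ∈ grid d m ↔ (∀ i, k i ≤ m) ∧ ∑ i, k i ≤ m := by
  simp [grid, Finset.mem_filter, Finset.mem_Icc, Pi.le_def, and_comm]

noncomputable def W (d m : ℕ) (y : Fin d → ℝ) (z : ℝ) (k : Fin d → ℕ) : ℝ :=
  ((m.factorial : ℝ) / ((m - ∑ i, k i).factorial * ∏ i, (k i).factorial)) *
    z ^ (m - ∑ i, k i) * ∏ i, y i ^ k i

lemma W_sum (d m : ℕ) (y : Fin d → ℝ) (z : ℝ) :
    ∑ k ∈ grid d m, W d m y z k = (z + ∑ i, y i) ^ m := by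
  classical
  have key := Finset.sum_pow_eq_sum_piAntidiag (Finset.univ : Finset (Option (Fin d)))
    (fun o => Option.elim o z y) m
  rw [Fintype.sum_option] at key
  simp only [Option.elim] at key
  rw [key]
  refine Finset.sum_nbij' (fun k => fun o => Option.elim o (m - ∑ j, k j) k)
    (fun k => fun j => k (some j)) ?_ ?_ ?_ ?_ ?_
  · intro k hk
    rw [mem_grid] at hk
    rw [Finset.mem_piAntidiag]
    refine ⟨?_, fun _ _ => mem_univ _⟩
    rw [Fintype.sum_option]
    simp only [Option.elim]
    omega
  · intro k hk
    rw [Finset.mem_piAntidiag] at hk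
    have hsum : ∑ o : Option (Fin d), k o = m := hk.1
    rw [Fintype.sum_option] at hsum
    rw [mem_grid]
    constructor
    · intro j
      calc k (some j) ≤ ∑ j, k (some j) :=
            Finset.single_le_sum (f := fun j => k (some j)) (fun _ _ => Nat.zero_le _) (mem_univ j)
        _ ≤ m := le_of_add_le_right hsum.le
    · exact le_of_add_le_right hsum.le
  · intro k _; rfl
  · intro k hk
    rw [Finset.mem_piAntidiag] at hk
    have hsum : ∑ o : Option (Fin d), k o = m := hk.1
    rw [Fintype.sum_option] at hsum
    funext o
    cases o with
    | none => simp only [Option.elim]; omega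
    | some j => rfl
  · intro k hk
    rw [mem_grid] at hk
    rw [W]
    show _ = (Nat.multinomial Finset.univ (fun o => Option.elim o (m - ∑ j, k j) k) : ℝ) *
        ∏ o : Option (Fin d), (Option.elim o z y : ℝ) ^ (Option.elim o (m - ∑ j, k j) k : ℕ)
    have hnone : m - ∑ j, k j + ∑ j, k j = m := by omega
    have hmulti : (Nat.multinomial (Finset.univ : Finset (Option (Fin d)))
        (fun o => Option.elim o (m - ∑ j, k j) k) : ℝ) =
        (m.factorial : ℝ) / ((m - ∑ j, k j).factorial * ∏ j, (k j).factorial) := by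
      have hspec := Nat.multinomial_spec (Finset.univ : Finset (Option (Fin d)))
        (fun o => Option.elim o (m - ∑ j, k j) k)
      rw [Fintype.sum_option, Fintype.prod_option] at hspec
      simp only [Option.elim] at hspec
      rw [hnone] at hspec
      have h1 : (0:ℝ) < ((m - ∑ j, k j).factorial * ∏ j, (k j).factorial : ℕ) := by
        positivity
      rw [eq_div_iff (by positivity)]
      push_cast
      rw [mul_comm]
      exact_mod_cast congrArg (Nat.cast (R := ℝ)) hspec
    rw [hmulti, Fintype.prod_option]
    simp only [Option.elim]
    ring

lemma W_fiber (d r n : ℕ) (hn : n ≤ r) (i : Fin d) (x : Fin d → ℝ) (z : ℝ) :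
    ∑ k ∈ (grid d r).filter (fun k => k i = n), W d r x z k
      = (r.choose n : ℝ) * x i ^ n * (z + ∑ j, x j - x i) ^ (r - n) := by
  classical
  set x' : Fin d → ℝ := Function.update x i 0 with hx'
  have hxsum : z + ∑ j, x' j = z + ∑ j, x j - x i := by
    have hsub : ∑ j, (x j - x' j) = x i := by
      rw [Finset.sum_eq_single i]
      · simp [hx']
      · intro b _ hb; simp [hx', Function.update_of_ne hb]
      · simp
    rw [Finset.sum_sub_distrib] at hsub
    linarith
  have step1 : ∑ k ∈ (grid d r).filter (fun k => k i = n), W d r x z k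
      = ∑ k' ∈ (grid d (r-n)).filter (fun k' => k' i = 0),
          (r.choose n : ℝ) * x i ^ n * W d (r-n) x' z k' := by
    refine Finset.sum_nbij' (fun k => Function.update k i 0)
      (fun k' => Function.update k' i n) ?_ ?_ ?_ ?_ ?_
    · intro k hk
      rw [Finset.mem_filter, mem_grid] at hk
      obtain ⟨⟨hb, hs⟩, hki⟩ := hk
      have hsu : ∑ j, Function.update k i 0 j = ∑ j, k j - n := by
        rw [Finset.sum_update_of_mem (mem_univ i), Finset.sdiff_singleton_eq_erase]
        rw [← Finset.add_sum_erase _ k (mem_univ i), hki]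
        omega
      have hni : n ≤ ∑ j, k j := hki ▸ Finset.single_le_sum
          (f := k) (fun _ _ => Nat.zero_le _) (mem_univ i)
      rw [Finset.mem_filter, mem_grid]
      refine ⟨⟨fun j => ?_, by show ∑ j, Function.update k i 0 j ≤ r - n; omega⟩, by simp⟩
      by_cases hji : j = i
      · subst hji; simp
      · simp only [Function.update_of_ne hji]
        have : k j ≤ ∑ l ∈ univ.erase i, k l :=
          Finset.single_le_sum (f := k) (fun _ _ => Nat.zero_le _)
            (Finset.mem_erase.2 ⟨hji, mem_univ j⟩)
        have h2 : ∑ l ∈ univ.erase i, k l = ∑ l, k l - n := by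
          have := (Finset.add_sum_erase _ k (mem_univ i)).symm
          omega
        omega
    · intro k' hk'
      rw [Finset.mem_filter, mem_grid] at hk'
      obtain ⟨⟨hb, hs⟩, hki⟩ := hk'
      have hsu : ∑ j, Function.update k' i n j = ∑ j, k' j + n := by
        rw [Finset.sum_update_of_mem (mem_univ i), Finset.sdiff_singleton_eq_erase]
        rw [← Finset.add_sum_erase _ k' (mem_univ i), hki]
        omega
      rw [Finset.mem_filter, mem_grid]
      refine ⟨⟨fun j => ?_, by show ∑ j, Function.update k' i n j ≤ r; omega⟩, by simp⟩
      by_cases hji : j = i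
      · subst hji; simpa using hn
      · simp only [Function.update_of_ne hji]
        exact le_trans (hb j) (by omega)
    · intro k hk
      rw [Finset.mem_filter] at hk
      funext j
      by_cases hji : j = i
      · subst hji; simp [hk.2]
      · simp [Function.update_of_ne hji]
    · intro k' hk'
      rw [Finset.mem_filter] at hk'
      funext j
      by_cases hji : j = i
      · subst hji; simp [hk'.2]
      · simp [Function.update_of_ne hji]
    · intro k hk
      rw [Finset.mem_filter, mem_grid] at hk
      obtain ⟨⟨hb, hs⟩, hki⟩ := hk
      have hni : n ≤ ∑ j, k j := hki ▸ Finset.single_le_sum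
          (f := k) (fun _ _ => Nat.zero_le _) (mem_univ i)
      have hsu : ∑ j, Function.update k i 0 j = ∑ j, k j - n := by
        rw [Finset.sum_update_of_mem (mem_univ i), Finset.sdiff_singleton_eq_erase]
        rw [← Finset.add_sum_erase _ k (mem_univ i), hki]
        omega
      rw [W, W, hsu]
      have he : r - n - (∑ j, k j - n) = r - ∑ j, k j := by omega
      rw [he]
      -- factorial products
      have hp1 : ∏ j, ((k j).factorial) = n.factorial * ∏ j ∈ univ.erase i, (k j).factorial := by
        rw [← Finset.mul_prod_erase univ (fun j => (k j).factorial) (mem_univ i), hki]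
      have hp2 : ∏ j, ((Function.update k i 0 j).factorial)
          = ∏ j ∈ univ.erase i, (k j).factorial := by
        rw [← Finset.mul_prod_erase univ _ (mem_univ i)]
        simp only [Function.update_self, Nat.factorial_zero, one_mul]
        exact Finset.prod_congr rfl fun j hj =>
          by rw [Function.update_of_ne (Finset.mem_erase.1 hj).1]
      have hp3 : ∏ j, x j ^ k j = x i ^ n * ∏ j ∈ univ.erase i, x j ^ k j := by
        rw [← Finset.mul_prod_erase univ (fun j => x j ^ k j) (mem_univ i), hki]
      have hp4 : ∏ j, x' j ^ (Function.update k i 0 j) = ∏ j ∈ univ.erase i, x j ^ k j := by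
        rw [← Finset.mul_prod_erase univ _ (mem_univ i)]
        simp only [Function.update_self, pow_zero, one_mul, hx']
        exact Finset.prod_congr rfl fun j hj => by
          rw [Function.update_of_ne (Finset.mem_erase.1 hj).1,
            Function.update_of_ne (Finset.mem_erase.1 hj).1]
      rw [hp1, hp2, hp3, hp4, Nat.cast_choose ℝ hn]
      have f1 : (0:ℝ) < (r - ∑ j, k j).factorial := by positivity
      have f2 : (0:ℝ) < ∏ j ∈ univ.erase i, ((k j).factorial : ℝ) := by positivity
      have f3 : (0:ℝ) < n.factorial := by positivity
      have f4 : (0:ℝ) < (r - n).factorial := by positivity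
      have hfac : ((r:ℕ) - n).factorial = (r-n).factorial := rfl
      push_cast
      field_simp
  rw [step1, ← Finset.mul_sum]
  have step2 : ∑ k' ∈ (grid d (r-n)).filter (fun k' => k' i = 0), W d (r-n) x' z k'
      = ∑ k' ∈ grid d (r-n), W d (r-n) x' z k' := by
    refine Finset.sum_filter_of_ne fun k' hk' hW => ?_
    by_contra hne
    apply hW
    rw [W]
    have : x' i ^ k' i = 0 := by
      rw [hx', Function.update_self]
      exact zero_pow hne
    rw [← Finset.mul_prod_erase univ (fun j => x' j ^ k' j) (mem_univ i), this]
    ring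
  rw [step2, W_sum, hxsum]

lemma Pw_eq_W (d m : ℕ) (k : Fin d → ℕ) (x : Fin d → ℝ) :
    Pw d m k x = W d m x (1 - ∑ i, x i) k := rfl

lemma Pw_sum (d m : ℕ) (x : Fin d → ℝ) : ∑ k ∈ grid d m, Pw d m k x = 1 := by
  simp_rw [Pw_eq_W]
  rw [W_sum]
  simp

lemma Pw_nonneg {d m : ℕ} {x : Fin d → ℝ} (hx : x ∈ simplexSet d) (k : Fin d → ℕ) :
    0 ≤ Pw d m k x := by
  obtain ⟨hxi, hxs⟩ := hx
  rw [Pw]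
  have h1 : (0:ℝ) ≤ (m.factorial : ℝ) / ((m - ∑ i, k i).factorial * ∏ i, (k i).factorial) := by
    positivity
  have h2 : (0:ℝ) ≤ (1 - ∑ i, x i) ^ (m - ∑ i, k i) := pow_nonneg (by linarith) _
  have h3 : (0:ℝ) ≤ ∏ i, x i ^ k i :=
    Finset.prod_nonneg fun i _ => pow_nonneg (hxi i).1 _
  positivity

lemma Pw_marginal (d r : ℕ) (i : Fin d) (x : Fin d → ℝ) (g : ℕ → ℝ) :
    ∑ k ∈ grid d r, g (k i) * Pw d r k x
      = ∑ n ∈ Finset.range (r+1), g n *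
          ((r.choose n : ℝ) * x i ^ n * (1 - x i) ^ (r - n)) := by
  classical
  have hmaps : ∀ k ∈ grid d r, k i ∈ Finset.range (r+1) := by
    intro k hk
    rw [mem_grid] at hk
    exact Finset.mem_range.2 (Nat.lt_succ_of_le (hk.1 i))
  rw [← Finset.sum_fiberwise_of_maps_to hmaps (fun k => g (k i) * Pw d r k x)]
  refine Finset.sum_congr rfl fun n hn => ?_
  rw [Finset.mem_range] at hn
  have key := W_fiber d r n (by omega) i x (1 - ∑ j, x j)
  have hz : (1 - ∑ j, x j) + ∑ j, x j - x i = 1 - x i := by ring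
  rw [hz] at key
  rw [← key, Finset.mul_sum]
  refine Finset.sum_congr rfl fun k hk => ?_
  rw [Finset.mem_filter] at hk
  rw [hk.2, Pw_eq_W]

lemma bernstein_variance (r : ℕ) (t : ℝ) :
    ∑ n ∈ Finset.range (r+1), ((r:ℝ) * t - n)^2 * ((r.choose n : ℝ) * t^n * (1-t)^(r-n))
      = r * t * (1 - t) := by
  have h := congrArg (Polynomial.eval t) (bernsteinPolynomial.variance ℝ r)
  simpa [bernsteinPolynomial, Polynomial.eval_finset_sum, mul_comm, mul_assoc,
    mul_left_comm] using h

lemma Pw_variance (d r : ℕ) (hr : 0 < r) (i : Fin d) (x : Fin d → ℝ) :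
    ∑ k ∈ grid d r, ((k i : ℝ)/r - x i)^2 * Pw d r k x = x i * (1 - x i) / r := by
  rw [Pw_marginal d r i x (fun n => ((n:ℝ)/r - x i)^2)]
  have hr' : (r:ℝ) ≠ 0 := Nat.cast_ne_zero.2 hr.ne'
  have key := bernstein_variance r (x i)
  calc ∑ n ∈ Finset.range (r+1), ((n:ℝ)/r - x i)^2 *
        ((r.choose n : ℝ) * x i ^ n * (1 - x i) ^ (r - n))
      = (1/(r:ℝ)^2) * ∑ n ∈ Finset.range (r+1), ((r:ℝ) * x i - n)^2 *
        ((r.choose n : ℝ) * x i ^ n * (1 - x i) ^ (r - n)) := by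
        rw [Finset.mul_sum]
        refine Finset.sum_congr rfl fun n _ => ?_
        have hsq : ((n:ℝ)/r - x i)^2 = (1/(r:ℝ)^2) * ((r:ℝ) * x i - n)^2 := by
          rw [div_sub' hr']
          rw [div_pow]
          rw [one_div, inv_mul_eq_div]
          congr 1
          ring
        rw [hsq]
        ring
    _ = (1/(r:ℝ)^2) * ((r:ℝ) * x i * (1 - x i)) := by rw [key]
    _ = x i * (1 - x i) / r := by field_simp

lemma abs_min_sub_le (A B c : ℝ) : |min A B - c| ≤ |A - c| + |B - c| := by
  rcases min_cases A B with ⟨h, _⟩ | ⟨h, _⟩ <;> rw [h]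
  · exact le_add_of_nonneg_right (abs_nonneg _)
  · exact le_add_of_nonneg_left (abs_nonneg _)

/-- Uniform boundedness of the correction term R_{i,r}. -/
theorem R_term_uniform_bound (d r : ℕ) (hr : 0 < r) (i : Fin d)
    (x : Fin d → ℝ) (hx : x ∈ simplexSet d) :
    |Real.sqrt r * ∑ k ∈ grid d r, ∑ l ∈ grid d r,
        ((min (k i) (l i) : ℝ) / r - x i) * Pw d r k x * Pw d r l x| ≤ 1 := by
  classical
  have hP0 : ∀ k, 0 ≤ Pw d r k x := fun k => Pw_nonneg hx k
  have hP1 : ∑ k ∈ grid d r, Pw d r k x = 1 := Pw_sum d r x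
  obtain ⟨hxi, hxs⟩ := hx
  set P : (Fin d → ℕ) → ℝ := fun k => Pw d r k x with hPdef
  set A : (Fin d → ℕ) → ℝ := fun k => |(k i : ℝ)/r - x i| with hA
  have hr' : (0:ℝ) < r := by exact_mod_cast hr
  have hsr : (0:ℝ) < Real.sqrt r := Real.sqrt_pos.2 hr'
  have hvar : ∑ k ∈ grid d r, ((k i : ℝ)/r - x i)^2 * P k ≤ 1/(4*r) := by
    rw [hPdef, Pw_variance d r hr i x, div_le_div_iff₀ hr' (by positivity)]
    nlinarith [mul_nonneg hr'.le (sq_nonneg (2 * x i - 1))]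
  set T : ℝ := ∑ k ∈ grid d r, A k * P k with hTdef
  have hT0 : 0 ≤ T :=
    Finset.sum_nonneg fun k _ => mul_nonneg (abs_nonneg _) (hP0 k)
  have hT : T ≤ 1/(2*Real.sqrt r) := by
    have hcs := Finset.sum_mul_sq_le_sq_mul_sq (grid d r)
      (fun k => A k * Real.sqrt (P k)) (fun k => Real.sqrt (P k))
    have he1 : ∀ k ∈ grid d r, (A k * Real.sqrt (P k)) * Real.sqrt (P k) = A k * P k := by
      intro k _
      rw [mul_assoc, Real.mul_self_sqrt (hP0 k)]
    have he2 : ∀ k ∈ grid d r, (A k * Real.sqrt (P k))^2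
        = ((k i : ℝ)/r - x i)^2 * P k := by
      intro k _
      rw [mul_pow, Real.sq_sqrt (hP0 k), hA]
      simp [sq_abs, hPdef]
    have he3 : ∀ k ∈ grid d r, (Real.sqrt (P k))^2 = P k := fun k _ => Real.sq_sqrt (hP0 k)
    rw [Finset.sum_congr rfl he1, Finset.sum_congr rfl he2, Finset.sum_congr rfl he3,
      hP1, mul_one] at hcs
    have hTsq : T^2 ≤ 1/(4*r) := le_trans hcs hvar
    have hsq := Real.sqrt_le_sqrt hTsq
    rw [Real.sqrt_sq hT0] at hsq
    refine le_trans hsq (le_of_eq ?_)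
    rw [show (1:ℝ)/(4*r) = (1/(2*Real.sqrt r))^2 by
      rw [div_pow, mul_pow, Real.sq_sqrt hr'.le]; norm_num]
    exact Real.sqrt_sq (by positivity)
  set D : ℝ := ∑ k ∈ grid d r, ∑ l ∈ grid d r,
      ((min (k i) (l i) : ℝ) / r - x i) * P k * P l with hDdef
  have hDabs : |D| ≤ 2 * T := by
    have step1 : |D| ≤ ∑ k ∈ grid d r, ∑ l ∈ grid d r, (A k + A l) * (P k * P l) := by
      refine le_trans (Finset.abs_sum_le_sum_abs _ _) ?_
      refine Finset.sum_le_sum fun k _ => ?_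
      refine le_trans (Finset.abs_sum_le_sum_abs _ _) ?_
      refine Finset.sum_le_sum fun l _ => ?_
      rw [abs_mul, abs_mul, abs_of_nonneg (hP0 k), abs_of_nonneg (hP0 l)]
      rw [mul_assoc]
      refine mul_le_mul_of_nonneg_right ?_ (mul_nonneg (hP0 k) (hP0 l))
      rw [← min_div_div_right hr'.le]
      exact abs_min_sub_le _ _ _
    have step2 : ∑ k ∈ grid d r, ∑ l ∈ grid d r, (A k + A l) * (P k * P l) = 2 * T := by
      have hinner : ∀ k ∈ grid d r, ∑ l ∈ grid d r, (A k + A l) * (P k * P l)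
          = A k * P k + P k * T := by
        intro k _
        calc ∑ l ∈ grid d r, (A k + A l) * (P k * P l)
            = ∑ l ∈ grid d r, (A k * P k * P l + P k * (A l * P l)) :=
              Finset.sum_congr rfl fun l _ => by ring
          _ = A k * P k * ∑ l ∈ grid d r, P l + P k * ∑ l ∈ grid d r, (A l * P l) := by
              rw [Finset.sum_add_distrib, ← Finset.mul_sum, ← Finset.mul_sum]
          _ = A k * P k + P k * T := by rw [hP1, mul_one, hTdef]
      rw [Finset.sum_congr rfl hinner, Finset.sum_add_distrib]
      have : ∑ k ∈ grid d r, P k * T = T := by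
        rw [← Finset.sum_mul, hP1, one_mul]
      rw [this, ← hTdef]
      ring
    rw [← step2]
    exact step1
  rw [abs_mul, abs_of_nonneg hsr.le]
  calc Real.sqrt r * |D| ≤ Real.sqrt r * (2 * T) := by
        exact mul_le_mul_of_nonneg_left hDabs hsr.le
    _ ≤ Real.sqrt r * (2 * (1/(2*Real.sqrt r))) := by
        have h2T : 2 * T ≤ 2 * (1/(2*Real.sqrt r)) := by linarith
        exact mul_le_mul_of_nonneg_left h2T hsr.le
    _ = 1 := by field_simp
end
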